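/- Let |A| > 1. If t ≲_WIF u (under all closed substitutions), then t and u have the same sets of weak traces, including weak traces ending in a variable: WT_V(t) = WT_V(u) and the weak traces of t and u ending with an action coincide. -/

import Mathlib

/-- BCCS terms over concrete actions `A` (with `none` playing the role of the
hidden action τ) and variables `V`. -/
inductive Tm (A V : Type) : Type
  | nil : Tm A V
  | var : V → Tm A V
  | plus : Tm A V → Tm A V → Tm A V
  | pre : Option A → Tm A V → Tm A V

namespace Tm

variable {A V : Type}

/-- The operational semantics of BCCS. -/
inductive Step : Tm A V → Option A → Tm A V → Prop
  | pre (α : Option A) (t : Tm A V) : Step (.pre α t) α t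
  | plusL {t : Tm A V} {α : Option A} {t' : Tm A V} (u : Tm A V) :
      Step t α t' → Step (.plus t u) α t'
  | plusR (t : Tm A V) {u : Tm A V} {α : Option A} {u' : Tm A V} :
      Step u α u' → Step (.plus t u) α u'

/-- `⇒` : the reflexive-transitive closure of τ-steps. -/
def WTau : Tm A V → Tm A V → Prop := Relation.ReflTransGen (fun t u => Step t none u)

/-- Strong (concrete) traces leading to a state. -/
inductive TraceTo : Tm A V → List A → Tm A V → Prop
  | refl (t : Tm A V) : TraceTo t [] t
  | act {t : Tm A V} {a : A} {t' : Tm A V} {w : List A} {u : Tm A V} :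
      Step t (some a) t' → TraceTo t' w u → TraceTo t (a :: w) u

/-- Weak traces leading to a state (τ-steps are skipped). -/
inductive WTraceTo : Tm A V → List A → Tm A V → Prop
  | refl (t : Tm A V) : WTraceTo t [] t
  | tau {t t' : Tm A V} {w : List A} {u : Tm A V} :
      Step t none t' → WTraceTo t' w u → WTraceTo t w u
  | act {t : Tm A V} {a : A} {t' : Tm A V} {w : List A} {u : Tm A V} :
      Step t (some a) t' → WTraceTo t' w u → WTraceTo t (a :: w) u

/-- The set of (strong) traces of a term. -/
def T (t : Tm A V) : Set (List A) := {w | ∃ t', TraceTo t w t'}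

/-- The set of weak traces of a term. -/
def WT (t : Tm A V) : Set (List A) := {w | ∃ t', WTraceTo t w t'}

/-- `(w, B)` is an impossible future of `t`. -/
def ImpFut (t : Tm A V) (w : List A) (B : Set (List A)) : Prop :=
  ∃ t', TraceTo t w t' ∧ ∀ s ∈ T t', s ∉ B

/-- `(w, B)` is a weak impossible future of `t`. -/
def WImpFut (t : Tm A V) (w : List A) (B : Set (List A)) : Prop :=
  ∃ t', WTraceTo t w t' ∧ ∀ s ∈ WT t', s ∉ B

/-- The (concrete) impossible futures preorder. -/
def IFle (p q : Tm A V) : Prop := ∀ w B, ImpFut p w B → ImpFut q w B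

/-- (Concrete) impossible futures equivalence. -/
def IFeq (p q : Tm A V) : Prop := IFle p q ∧ IFle q p

/-- The weak impossible futures preorder. -/
def WIFle (p q : Tm A V) : Prop :=
  (∀ w B, WImpFut p w B → WImpFut q w B) ∧ (WT p = WT q) ∧
  ((∃ p', Step p none p') → ∃ q', Step q none q')

/-- Weak impossible futures equivalence. -/
def WIFeq (p q : Tm A V) : Prop := WIFle p q ∧ WIFle q p

/-- The variables occurring in a term. -/
def vars : Tm A V → Set V
  | nil => ∅
  | var x => {x}
  | plus t u => vars t ∪ vars u
  | pre _ t => vars t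

/-- A term is closed if it contains no variables. -/
def Closed (t : Tm A V) : Prop := vars t = ∅

/-- Substitution. -/
def subst (σ : V → Tm A V) : Tm A V → Tm A V
  | nil => nil
  | var x => σ x
  | plus t u => plus (subst σ t) (subst σ u)
  | pre α t => pre α (subst σ t)

/-- A closed substitution. -/
def ClosedSub (σ : V → Tm A V) : Prop := ∀ x, Closed (σ x)

/-- A BCCSP term: one containing no occurrence of the τ prefix. -/
def NoTau : Tm A V → Prop
  | nil => True
  | var _ => True
  | plus t u => NoTau t ∧ NoTau u
  | pre none _ => False
  | pre (some _) t => NoTau t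

/-- The variables occurring initially (outside all prefixes). -/
def initVars : Tm A V → Set V
  | nil => ∅
  | var x => {x}
  | plus t u => initVars t ∪ initVars u
  | pre _ _ => ∅

/-- The variables having a non-initial occurrence (under some prefix). -/
def deepVars : Tm A V → Set V
  | nil => ∅
  | var _ => ∅
  | plus t u => deepVars t ∪ deepVars u
  | pre _ t => vars t

/-- A term is safe if no variable occurs both initially and non-initially. -/
def Safe (t : Tm A V) : Prop := initVars t ∩ deepVars t = ∅

/-- `init-τ` : rename all initial prefixes into τ. -/
def initTau : Tm A V → Tm A V
  | nil => nil
  | var x => var x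
  | plus t u => plus (initTau t) (initTau u)
  | pre _ t => pre none t

/-- The weak depth of a term (τ-prefixes are not counted). -/
def wdepth : Tm A V → ℕ
  | nil => 0
  | var _ => 0
  | plus t u => max (wdepth t) (wdepth u)
  | pre none t => wdepth t
  | pre (some _) t => wdepth t + 1

/-- `n`-fold prefixing with the action `a`. -/
def npre (a : A) : ℕ → Tm A V → Tm A V
  | 0, t => t
  | n + 1, t => pre (some a) (npre a n t)

/-- Finite sums of terms. -/
def listSum : List (Tm A V) → Tm A V
  | [] => nil
  | t :: l => plus t (listSum l)

/-- Weak traces ending in a variable: `(w, x) ∈ WTV t` iff `t` can weakly perform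
`w` and reach a term in which `x` occurs initially. -/
def WTV (t : Tm A V) : Set (List A × V) :=
  {wx | ∃ t', WTraceTo t wx.1 t' ∧ wx.2 ∈ initVars t'}

/-- The axioms A1-4 + WIF1 + WIF2 (as schemas, i.e. closed under instantiation). -/
inductive AX : Tm A V → Tm A V → Prop
  | A1 (t u : Tm A V) : AX (.plus t u) (.plus u t)
  | A2 (t u v : Tm A V) : AX (.plus (.plus t u) v) (.plus t (.plus u v))
  | A3 (t : Tm A V) : AX (.plus t t) t
  | A4 (t : Tm A V) : AX (.plus t .nil) t
  | WIF1 (α : Option A) (t u : Tm A V) :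
      AX (.pre α (.plus (.pre none t) (.pre none u))) (.plus (.pre α t) (.pre α u))
  | WIF2 (t u : Tm A V) :
      AX (.plus (.pre none t) u) (.plus (.pre none t) (.pre none (.plus t u)))

/-- Equational derivability from an axiomatization `E`. -/
inductive Deriv (E : Tm A V → Tm A V → Prop) : Tm A V → Tm A V → Prop
  | ax {t u : Tm A V} : E t u → Deriv E t u
  | inst {t u : Tm A V} (σ : V → Tm A V) : E t u → Deriv E (subst σ t) (subst σ u)
  | refl (t : Tm A V) : Deriv E t t
  | symm {t u : Tm A V} : Deriv E t u → Deriv E u t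
  | trans {t u v : Tm A V} : Deriv E t u → Deriv E u v → Deriv E t v
  | pre (α : Option A) {t u : Tm A V} : Deriv E t u → Deriv E (.pre α t) (.pre α u)
  | plus {t u t' u' : Tm A V} :
      Deriv E t t' → Deriv E u u' → Deriv E (.plus t u) (.plus t' u')

/-- Inequational derivability from an axiomatization `E` (no symmetry). -/
inductive IDeriv (E : Tm A V → Tm A V → Prop) : Tm A V → Tm A V → Prop
  | ax {t u : Tm A V} : E t u → IDeriv E t u
  | inst {t u : Tm A V} (σ : V → Tm A V) : E t u → IDeriv E (subst σ t) (subst σ u)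
  | refl (t : Tm A V) : IDeriv E t t
  | trans {t u v : Tm A V} : IDeriv E t u → IDeriv E u v → IDeriv E t v
  | pre (α : Option A) {t u : Tm A V} : IDeriv E t u → IDeriv E (.pre α t) (.pre α u)
  | plus {t u t' u' : Tm A V} :
      IDeriv E t t' → IDeriv E u u' → IDeriv E (.plus t u) (.plus t' u')

end Tm

namespace Tm

variable {A V : Type}

lemma wtrace_append {t t' s : Tm A V} {w v : List A}
    (h1 : WTraceTo t w t') : WTraceTo t' v s → WTraceTo t (w ++ v) s := by
  induction h1 with
  | refl => intro h2; simpa using h2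
  | tau hs _ ih => intro h2; exact .tau hs (ih h2)
  | act hs _ ih => intro h2; exact .act hs (ih h2)

lemma step_subst {σ : V → Tm A V} {t : Tm A V} {α : Option A} {t' : Tm A V}
    (h : Step t α t') : Step (subst σ t) α (subst σ t') := by
  induction h with
  | pre α t => exact .pre _ _
  | plusL u _ ih => exact .plusL _ ih
  | plusR t _ ih => exact .plusR _ ih

lemma step_subst_var {σ : V → Tm A V} {t : Tm A V} {x : V} {α : Option A} {s : Tm A V}
    (hx : x ∈ initVars t) (h : Step (σ x) α s) : Step (subst σ t) α s := by
  induction t with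
  | nil => simp [initVars] at hx
  | var y =>
    have : x = y := hx
    subst this; exact h
  | plus t u iht ihu =>
    rcases hx with hx | hx
    · exact .plusL _ (iht hx)
    · exact .plusR _ (ihu hx)
  | pre α' t iht => simp [initVars] at hx

lemma step_subst_inv {σ : V → Tm A V} {t : Tm A V} {α : Option A} {s : Tm A V}
    (h : Step (subst σ t) α s) :
    (∃ t', Step t α t' ∧ s = subst σ t') ∨ ∃ x ∈ initVars t, Step (σ x) α s := by
  induction t with
  | nil => cases h
  | var y => exact .inr ⟨y, rfl, h⟩
  | plus t u iht ihu =>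
    cases h with
    | plusL _ h' =>
      rcases iht h' with ⟨t', h1, h2⟩ | ⟨x, hx, hs⟩
      · exact .inl ⟨t', .plusL _ h1, h2⟩
      · exact .inr ⟨x, Or.inl hx, hs⟩
    | plusR _ h' =>
      rcases ihu h' with ⟨t', h1, h2⟩ | ⟨x, hx, hs⟩
      · exact .inl ⟨t', .plusR _ h1, h2⟩
      · exact .inr ⟨x, Or.inr hx, hs⟩
  | pre α' t iht =>
    cases h with
    | pre => exact .inl ⟨t, .pre _ _, rfl⟩

lemma wtrace_subst {σ : V → Tm A V} {t : Tm A V} {w : List A} {t' : Tm A V}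
    (h : WTraceTo t w t') : WTraceTo (subst σ t) w (subst σ t') := by
  induction h with
  | refl t => exact .refl _
  | tau hs _ ih => exact .tau (step_subst hs) ih
  | act hs _ ih => exact .act (step_subst hs) ih

lemma wtv_subst {σ : V → Tm A V} {t : Tm A V} {w v : List A} {x : V}
    (h1 : (w, x) ∈ WTV t) (h2 : v ∈ WT (σ x)) : (w ++ v) ∈ WT (subst σ t) := by
  obtain ⟨t', htr, hx⟩ := h1
  obtain ⟨s, hv⟩ := h2
  have hlift : ∃ s', WTraceTo (subst σ t') v s' := by
    cases hv with
    | refl => exact ⟨_, .refl _⟩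
    | tau hs rest => exact ⟨_, .tau (step_subst_var hx hs) rest⟩
    | act hs rest => exact ⟨_, .act (step_subst_var hx hs) rest⟩
  obtain ⟨s', hs'⟩ := hlift
  exact ⟨s', wtrace_append (wtrace_subst htr) hs'⟩

lemma wt_subst_inv {σ : V → Tm A V} :
    ∀ {p : Tm A V} {w : List A} {s : Tm A V}, WTraceTo p w s → ∀ t : Tm A V, p = subst σ t →
      w ∈ WT t ∨ ∃ w1 v x, w = w1 ++ v ∧ (w1, x) ∈ WTV t ∧ v ∈ WT (σ x) := by
  intro p w s h
  induction h with
  | refl p => intro t ht; exact .inl ⟨t, .refl t⟩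
  | @tau p p1 w s hs htr ih =>
    intro t ht; subst ht
    rcases step_subst_inv hs with ⟨t1, h1, rfl⟩ | ⟨x, hx, hσ⟩
    · rcases ih t1 rfl with ⟨s1, tr1⟩ | ⟨w1, v, x, rfl, ⟨t'', tr'', hx⟩, hv⟩
      · exact .inl ⟨s1, .tau h1 tr1⟩
      · exact .inr ⟨w1, v, x, rfl, ⟨t'', .tau h1 tr'', hx⟩, hv⟩
    · exact .inr ⟨[], w, x, rfl, ⟨t, .refl t, hx⟩, ⟨s, .tau hσ htr⟩⟩
  | @act p a p1 w s hs htr ih =>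
    intro t ht; subst ht
    rcases step_subst_inv hs with ⟨t1, h1, rfl⟩ | ⟨x, hx, hσ⟩
    · rcases ih t1 rfl with ⟨s1, tr1⟩ | ⟨w1, v, x, rfl, ⟨t'', tr'', hx⟩, hv⟩
      · exact .inl ⟨s1, .act h1 tr1⟩
      · exact .inr ⟨a :: w1, v, x, rfl, ⟨t'', .act h1 tr'', hx⟩, hv⟩
    · exact .inr ⟨[], a :: w, x, rfl, ⟨t, .refl t, hx⟩, ⟨s, .act hσ htr⟩⟩

lemma wdepth_step {t t' : Tm A V} {α : Option A} (h : Step t α t') :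
    (α = none → wdepth t' ≤ wdepth t) ∧ (∀ a, α = some a → wdepth t' + 1 ≤ wdepth t) := by
  induction h with
  | pre α t =>
    cases α with
    | none => exact ⟨fun _ => le_refl _, fun a ha => absurd ha (by simp)⟩
    | some c => exact ⟨fun ha => absurd ha (by simp), fun a _ => le_refl _⟩
  | plusL u _ ih =>
    exact ⟨fun ha => (ih.1 ha).trans (le_max_left _ _),
      fun a ha => (ih.2 a ha).trans (le_max_left _ _)⟩
  | plusR t _ ih =>
    exact ⟨fun ha => (ih.1 ha).trans (le_max_right _ _),
      fun a ha => (ih.2 a ha).trans (le_max_right _ _)⟩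

lemma wdepth_step_tau {t t' : Tm A V} (h : Step t none t') : wdepth t' ≤ wdepth t :=
  (wdepth_step h).1 rfl

lemma wdepth_step_act {t t' : Tm A V} {a : A} (h : Step t (some a) t') :
    wdepth t' + 1 ≤ wdepth t :=
  (wdepth_step h).2 a rfl

lemma length_le_wdepth {t : Tm A V} {w : List A} {s : Tm A V}
    (h : WTraceTo t w s) : w.length ≤ wdepth t := by
  induction h with
  | refl => simp
  | tau hs _ ih => exact ih.trans (wdepth_step_tau hs)
  | act hs _ ih =>
    have := wdepth_step_act hs
    simp only [List.length_cons]
    omega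

/-- The "deterministic word" term `a₁·a₂·⋯·aₙ·0`. -/
def ofList : List A → Tm A V
  | [] => nil
  | c :: l => pre (some c) (ofList l)

lemma closed_ofList (L : List A) : Closed (ofList L : Tm A V) := by
  induction L with
  | nil => rfl
  | cons c l ih => exact ih

lemma step_ofList {L : List A} {α : Option A} {s : Tm A V} (h : Step (ofList L) α s) :
    ∃ c L', L = c :: L' ∧ α = some c ∧ s = ofList L' := by
  cases L with
  | nil => cases h
  | cons c l => cases h; exact ⟨c, l, rfl, rfl, rfl⟩

lemma wtrace_ofList_prefix :
    ∀ {p : Tm A V} {v : List A} {s : Tm A V}, WTraceTo p v s → ∀ L : List A, p = ofList L →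
      v <+: L := by
  intro p v s h
  induction h with
  | refl => intro L _; exact List.nil_prefix ..
  | tau hs _ ih =>
    intro L hL; subst hL
    obtain ⟨c, L', _, hα, _⟩ := step_ofList hs
    cases hα
  | act hs _ ih =>
    intro L hL; subst hL
    obtain ⟨c, L', rfl, hα, rfl⟩ := step_ofList hs
    obtain rfl := Option.some.inj hα
    exact (List.cons_prefix_cons).2 ⟨rfl, ih L' rfl⟩

lemma wtrace_ofList_full (L : List A) : WTraceTo (ofList L : Tm A V) L nil := by
  induction L with
  | nil => exact .refl _
  | cons c l ih => exact .act (.pre _ _) ih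

lemma wtrace_nil {w : List A} {s : Tm A V} (h : WTraceTo nil w s) : w = [] := by
  cases h with
  | refl => rfl
  | tau hs _ => cases hs
  | act hs _ => cases hs

lemma wt_subst_nil (t : Tm A V) : WT (subst (fun _ => (nil : Tm A V)) t) = WT t := by
  ext w
  constructor
  · rintro ⟨s, tr⟩
    rcases wt_subst_inv tr t rfl with hmem | ⟨w1, v, x, rfl, ⟨t', tr', _⟩, ⟨sv, trv⟩⟩
    · exact hmem
    · have hv : v = [] := wtrace_nil trv
      subst hv
      rw [List.append_nil]; exact ⟨t', tr'⟩
  · rintro ⟨s, tr⟩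
    exact ⟨_, wtrace_subst tr⟩

lemma key1 {a b : A} (hab : a ≠ b) {N : ℕ} {w w' v : List A}
    (hw' : w'.length < N)
    (heq : w ++ (List.replicate N a ++ [b]) = w' ++ v)
    (hv : v <+: List.replicate N a) : False := by
  have hlen : w.length + (N + 1) = w'.length + v.length := by
    have := congrArg List.length heq
    simpa using this
  have hvne : v ≠ [] := by
    intro hnil
    subst hnil
    simp at hlen
    omega
  have h1 : (w ++ (List.replicate N a ++ [b])).getLast? = some b := by
    rw [← List.append_assoc]
    exact List.getLast?_concat
  rw [heq, List.getLast?_append_of_ne_nil _ hvne] at h1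
  have hbv : b ∈ v := by
    obtain ⟨hne, hb⟩ := List.mem_getLast?_eq_getLast (Option.mem_def.2 h1)
    rw [hb]; exact List.getLast_mem hne
  have : b = a := List.eq_of_mem_replicate (hv.sublist.subset hbv)
  exact hab this.symm

lemma key2 {a b : A} (hab : a ≠ b) {N : ℕ} {w w' v : List A}
    (hw' : w'.length < N)
    (heq : w ++ (List.replicate N a ++ [b]) = w' ++ v)
    (hv : v <+: List.replicate N a ++ [b]) : w = w' := by
  by_cases hle : v.length ≤ N
  · exfalso
    apply key1 hab hw' heq
    have hvtake := List.prefix_iff_eq_take.1 hv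
    rw [List.take_append_of_le_length (by simpa using hle)] at hvtake
    rw [hvtake]
    exact List.take_prefix _ _
  · have hlenle : v.length ≤ N + 1 := by simpa using hv.length_le
    have hfull : v = List.replicate N a ++ [b] :=
      hv.sublist.eq_of_length (by simp; omega)
    subst hfull
    exact List.append_cancel_right heq

lemma wtv_mono {a b : A} (hab : a ≠ b) (t u : Tm A V)
    (h : ∀ ρ : V → Tm A V, ClosedSub ρ → WT (subst ρ t) = WT (subst ρ u)) :
    WTV t ⊆ WTV u := by
  classical
  rintro ⟨w, x⟩ hwx
  set N := wdepth t + wdepth u + 1 with hN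
  set ρ : V → Tm A V := fun y =>
    if y = x then ofList (List.replicate N a ++ [b]) else ofList (List.replicate N a) with hρ
  have hc : ClosedSub ρ := by
    intro y
    simp only [hρ]
    split <;> exact closed_ofList _
  have hfull : (List.replicate N a ++ [b]) ∈ WT (ρ x) := by
    have : ρ x = ofList (List.replicate N a ++ [b]) := by simp [hρ]
    rw [this]
    exact ⟨_, wtrace_ofList_full _⟩
  have hs : (w ++ (List.replicate N a ++ [b])) ∈ WT (subst ρ t) := wtv_subst hwx hfull
  rw [h ρ hc] at hs
  obtain ⟨send, htrend⟩ := hs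
  rcases wt_subst_inv htrend u rfl with ⟨s', tr'⟩ | ⟨w1, v, y, heq, hw1, hv⟩
  · exfalso
    have := length_le_wdepth tr'
    simp at this
    omega
  · obtain ⟨u', tru', hyu'⟩ := hw1
    have hw1len : w1.length < N := by
      have h2 : w1.length ≤ wdepth u := length_le_wdepth tru'
      omega
    obtain ⟨sv, trv⟩ := hv
    by_cases hyx : y = x
    · subst hyx
      have hρy : ρ y = ofList (List.replicate N a ++ [b]) := by simp [hρ]
      rw [hρy] at trv
      have hvpre := wtrace_ofList_prefix trv _ rfl
      have hww1 : w = w1 := key2 hab hw1len heq hvpre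
      subst hww1
      exact ⟨u', tru', hyu'⟩
    · exfalso
      have hρy : ρ y = ofList (List.replicate N a) := by simp [hρ, hyx]
      rw [hρy] at trv
      have hvpre := wtrace_ofList_prefix trv _ rfl
      exact key1 hab hw1len heq hvpre

end Tm


/-- for `|A| > 1`, if `t ≲_WIF u` under all closed substitutions,
then `t` and `u` have the same weak traces and the same weak traces ending in a
variable. -/
theorem stmt16 {A V : Type} [Countable V] (hA : ∃ a b : A, a ≠ b)
    (t u : Tm A V)
    (h : ∀ ρ : V → Tm A V, Tm.ClosedSub ρ → Tm.WIFle (Tm.subst ρ t) (Tm.subst ρ u)) :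
    Tm.WT t = Tm.WT u ∧ Tm.WTV t = Tm.WTV u := by
  obtain ⟨a, b, hab⟩ := hA
  have hWTcomp : ∀ ρ : V → Tm A V, Tm.ClosedSub ρ →
      Tm.WT (Tm.subst ρ t) = Tm.WT (Tm.subst ρ u) := fun ρ hρ => (h ρ hρ).2.1
  have hnil : Tm.ClosedSub (fun _ : V => (Tm.nil : Tm A V)) := fun _ => rfl
  constructor
  · rw [← Tm.wt_subst_nil t, ← Tm.wt_subst_nil u]
    exact hWTcomp _ hnil
  · apply Set.Subset.antisymm
    · exact Tm.wtv_mono hab t u hWTcomp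
    · exact Tm.wtv_mono hab u t (fun ρ hρ => (hWTcomp ρ hρ).symm)
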